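/- Let V be a real inner product space of signature (p,q) (nondegenerate symmetric bilinear form Q(v) = (v,v)), with p, q ≥ 1 and p + q ≥ 3, and let x : V → ℝ be a polynomial function that vanishes on the entire null cone N = {v : Q(v) = 0}. Then Q divides x in the ring of polynomial functions on V: there is a polynomial y with x = Q·y. -/

import Mathlib

open MvPolynomial

/-- A multivariate real polynomial vanishing on a nonempty open set is zero. -/
private lemma zero_on_open : ∀ (n : ℕ) (f : MvPolynomial (Fin n) ℝ) (U : Set (Fin n → ℝ)),
    IsOpen U → U.Nonempty → (∀ v ∈ U, MvPolynomial.eval v f = 0) → f = 0 := by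
  intro n
  induction n with
  | zero =>
      intro f U hU hne hf
      obtain ⟨v0, hv0⟩ := hne
      apply MvPolynomial.funext
      intro v
      have hv : v = v0 := Subsingleton.elim _ _
      rw [hv, map_zero]
      exact hf v0 hv0
  | succ n ih =>
      intro f U hU hne hf
      obtain ⟨c, hc⟩ := hne
      obtain ⟨ε, hε, hball⟩ := Metric.isOpen_iff.1 hU c hc
      have hcoeff : ∀ k, (finSuccEquiv ℝ n f).coeff k = 0 := by
        intro k
        apply ih _ (Metric.ball (Fin.tail c) ε) Metric.isOpen_ball
          ⟨_, Metric.mem_ball_self hε⟩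
        intro v hv
        have hmap : (finSuccEquiv ℝ n f).map (MvPolynomial.eval v) = 0 := by
          apply Polynomial.eq_zero_of_infinite_isRoot
          have hsub : Metric.ball (c 0) ε ⊆
              {t | ((finSuccEquiv ℝ n f).map (MvPolynomial.eval v)).IsRoot t} := by
            intro t ht
            have hmem : Fin.cons t v ∈ U := by
              apply hball
              rw [Metric.mem_ball]
              rw [dist_pi_lt_iff hε]
              intro i
              refine Fin.cases ?_ ?_ i
              · simpa using Metric.mem_ball.1 ht
              · intro k
                simp only [Fin.cons_succ]
                exact lt_of_le_of_lt (dist_le_pi_dist v (Fin.tail c) k) (Metric.mem_ball.1 hv)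
            have := hf _ hmem
            rwa [MvPolynomial.eval_eq_eval_mv_eval'] at this
          have hinf : (Metric.ball (c 0) ε).Infinite := by
            rw [Real.ball_eq_Ioo]
            exact Set.Ioo_infinite (by linarith)
          exact hinf.mono hsub
        have := congrArg (fun p => Polynomial.coeff p k) hmap
        simpa [Polynomial.coeff_map] using this
      have hF : finSuccEquiv ℝ n f = 0 := Polynomial.ext fun k => by
        rw [hcoeff k, Polynomial.coeff_zero]
      have := congrArg (finSuccEquiv ℝ n).symm hF
      simpa using this

private lemma hC_fse (n : ℕ) (r : ℝ) :
    finSuccEquiv ℝ n (MvPolynomial.C r) = Polynomial.C (MvPolynomial.C r) := by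
  simp [finSuccEquiv_apply]

private lemma aux_dvd (n : ℕ) (ε : Fin (n + 1) → ℝ)
    (hε0 : ε 0 = -1) (j : Fin (n + 1)) (hεj : ε j = 1)
    (Q x : MvPolynomial (Fin (n + 1)) ℝ)
    (hQ : Q = ∑ i, MvPolynomial.C (ε i) * MvPolynomial.X i ^ 2)
    (hx : ∀ v, MvPolynomial.eval v Q = 0 → MvPolynomial.eval v x = 0) : Q ∣ x := by
  classical
  set S : MvPolynomial (Fin n) ℝ := ∑ i : Fin n, MvPolynomial.C (ε i.succ) * MvPolynomial.X i ^ 2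
    with hS
  set D : Polynomial (MvPolynomial (Fin n) ℝ) := Polynomial.X ^ 2 - Polynomial.C S with hD
  have hmonic : D.Monic := by
    apply Polynomial.monic_X_pow_sub
    calc (Polynomial.C S).degree ≤ 0 := Polynomial.degree_C_le
    _ < 2 := by norm_num
  have hQD : finSuccEquiv ℝ n Q = -D := by
    rw [hQ, map_sum, Fin.sum_univ_succ]
    rw [hD, hS]
    simp only [map_mul, map_pow, finSuccEquiv_X_zero, finSuccEquiv_X_succ, hC_fse, hε0,
      map_neg, map_one, map_sum]
    ring
  -- degree of D is 2
  have hdegD : D.degree = 2 := by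
    rw [hD]
    exact Polynomial.degree_X_pow_sub_C (by norm_num) S
  have hdiv := Polynomial.modByMonic_add_div (finSuccEquiv ℝ n x) D
  set r : Polynomial (MvPolynomial (Fin n) ℝ) := finSuccEquiv ℝ n x %ₘ D with hrdef
  have hdeg : r.degree < 2 := by
    rw [← hdegD]
    exact Polynomial.degree_modByMonic_lt _ hmonic
  have hdeg1 : r.degree ≤ 1 := by
    by_contra hcon
    push_neg at hcon
    have h2 : (1 : WithBot ℕ) + 1 ≤ r.degree := Nat.WithBot.add_one_le_of_lt hcon
    have h2' : (2 : WithBot ℕ) ≤ r.degree := by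
      have h11 : (1 : WithBot ℕ) + 1 = 2 := by norm_num
      rwa [h11] at h2
    exact absurd hdeg (not_lt.2 h2')
  set a := r.coeff 1 with ha
  set b := r.coeff 0 with hb
  have hr : r = Polynomial.C a * Polynomial.X + Polynomial.C b :=
    Polynomial.eq_X_add_C_of_degree_le_one hdeg1
  -- the key evaluation identity
  have keyeval : ∀ (v : Fin n → ℝ) (t : ℝ), t ^ 2 = MvPolynomial.eval v S →
      MvPolynomial.eval v a * t + MvPolynomial.eval v b = 0 := by
    intro v t ht
    have hQzero : MvPolynomial.eval (Fin.cons t v) Q = 0 := by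
      rw [MvPolynomial.eval_eq_eval_mv_eval', hQD]
      simp [hD, ht]
    have hxzero := hx _ hQzero
    rw [MvPolynomial.eval_eq_eval_mv_eval'] at hxzero
    conv at hxzero => rw [← hdiv]
    rw [Polynomial.map_add, Polynomial.map_mul, Polynomial.eval_add, Polynomial.eval_mul] at hxzero
    have hDzero : Polynomial.eval t (D.map (MvPolynomial.eval v)) = 0 := by
      simp [hD, ht]
    rw [hDzero, zero_mul, add_zero, hr] at hxzero
    simpa using hxzero
  -- the open set where S is positive
  set U : Set (Fin n → ℝ) := {v | 0 < MvPolynomial.eval v S} with hU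
  have hUopen : IsOpen U := by
    have : U = (fun v => MvPolynomial.eval v S) ⁻¹' Set.Ioi 0 := rfl
    rw [this]
    exact isOpen_Ioi.preimage (MvPolynomial.continuous_eval S)
  have hjne : j ≠ 0 := by
    intro h
    rw [h, hε0] at hεj
    norm_num at hεj
  obtain ⟨k, hk⟩ := Fin.eq_succ_of_ne_zero hjne
  have hUne : U.Nonempty := by
    refine ⟨fun i => if i = k then 1 else 0, ?_⟩
    have : MvPolynomial.eval (fun i => if i = k then (1 : ℝ) else 0) S = ε j := by
      rw [hS, hk]
      simp only [map_sum, MvPolynomial.eval_mul, MvPolynomial.eval_C, MvPolynomial.eval_pow,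
        MvPolynomial.eval_X]
      rw [Finset.sum_eq_single k]
      · simp
      · intro i _ hik
        simp [hik]
      · simp
    simp only [hU, Set.mem_setOf_eq, this, hεj]
    norm_num
  have hbz : ∀ v ∈ U, MvPolynomial.eval v b = 0 := by
    intro v hv
    have hvpos : 0 < MvPolynomial.eval v S := hv
    set s := Real.sqrt (MvPolynomial.eval v S) with hs
    have hs2 : s ^ 2 = MvPolynomial.eval v S := Real.sq_sqrt hvpos.le
    have h1 := keyeval v s hs2
    have h2 := keyeval v (-s) (by rw [neg_pow]; simpa using hs2)
    linarith
  have haz : ∀ v ∈ U, MvPolynomial.eval v a = 0 := by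
    intro v hv
    have hvpos : 0 < MvPolynomial.eval v S := hv
    set s := Real.sqrt (MvPolynomial.eval v S) with hs
    have hspos : 0 < s := Real.sqrt_pos.2 hvpos
    have hs2 : s ^ 2 = MvPolynomial.eval v S := Real.sq_sqrt hvpos.le
    have h1 := keyeval v s hs2
    have h2 := keyeval v (-s) (by rw [neg_pow]; simpa using hs2)
    have : MvPolynomial.eval v a * s = 0 := by linarith
    rcases mul_eq_zero.1 this with h | h
    · exact h
    · exact absurd h hspos.ne'
  have ha0 : a = 0 := zero_on_open n a U hUopen hUne haz
  have hb0 : b = 0 := zero_on_open n b U hUopen hUne hbz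
  have hr0 : r = 0 := by rw [hr, ha0, hb0]; simp
  refine ⟨(finSuccEquiv ℝ n).symm (-(finSuccEquiv ℝ n x /ₘ D)), ?_⟩
  apply (finSuccEquiv ℝ n).injective
  rw [map_mul, hQD, AlgEquiv.apply_symm_apply]
  conv_lhs => rw [← hdiv, hr0, zero_add]
  ring

theorem stmt18 (p q : ℕ) (hp : 1 ≤ p) (hq : 1 ≤ q) (hpq : 3 ≤ p + q)
    (Q : MvPolynomial (Fin (p + q)) ℝ)
    (hQ : Q = ∑ i : Fin (p + q),
        (if (i : ℕ) < p then (-1 : MvPolynomial (Fin (p + q)) ℝ) else 1) *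
          (MvPolynomial.X i) ^ 2)
    (x : MvPolynomial (Fin (p + q)) ℝ)
    (hx : ∀ v : Fin (p + q) → ℝ, MvPolynomial.eval v Q = 0 → MvPolynomial.eval v x = 0) :
    Q ∣ x := by
  obtain ⟨n, hn⟩ : ∃ n, p + q = n + 1 := ⟨p + q - 1, by omega⟩
  set e := MvPolynomial.renameEquiv ℝ (finCongr hn) with he
  set ε : Fin (n + 1) → ℝ := fun i => if (i : ℕ) < p then -1 else 1 with hε
  have hε0 : ε 0 = -1 := by
    simp only [hε]
    rw [if_pos]
    exact lt_of_lt_of_le (b := 1) (by simp) hp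
  have hplt : p < n + 1 := by omega
  have hεj : ε ⟨p, hplt⟩ = 1 := by simp [hε]
  have heQ : e Q = ∑ i : Fin (n + 1), MvPolynomial.C (ε i) * MvPolynomial.X i ^ 2 := by
    rw [hQ, he]
    simp only [MvPolynomial.renameEquiv_apply, map_sum, map_mul, map_pow,
      MvPolynomial.rename_X]
    rw [← Equiv.sum_comp (finCongr hn)
      (fun i => MvPolynomial.C (ε i) * MvPolynomial.X i ^ 2)]
    apply Finset.sum_congr rfl
    intro i _
    have hcoe : ((finCongr hn i : Fin (n + 1)) : ℕ) = (i : ℕ) := rfl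
    by_cases hip : (i : ℕ) < p
    · simp [hε, hcoe, hip]
    · simp [hε, hcoe, hip]
  have hdvd : e Q ∣ e x := by
    apply aux_dvd n ε hε0 ⟨p, hplt⟩ hεj _ _ heQ
    intro v hv
    rw [he, MvPolynomial.renameEquiv_apply, MvPolynomial.eval_rename] at hv ⊢
    exact hx _ hv
  have := map_dvd e.symm hdvd
  simpa using this
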